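/- In the uniform model (w_k = 1 for all k), among all segments of A of length at least L, the shortest segment achieving the maximum density has length at most 2L − 1. -/

import Mathlib

noncomputable def udensity (a : ℕ → ℝ) (i j : ℕ) : ℝ :=
  (∑ t ∈ Finset.Icc i j, a t) / (j - i + 1 : ℝ)

theorem uniform_shortest_max_density_length (a : ℕ → ℝ)
    (n L : ℕ) (hL : 0 < L) (hLn : L ≤ n) (i j : ℕ)
    (hi : 1 ≤ i) (hij : i ≤ j) (hjn : j ≤ n)
    (hlen : L ≤ j - i + 1)
    (hopt : ∀ i' j', 1 ≤ i' → i' ≤ j' → j' ≤ n → L ≤ j' - i' + 1 →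
      udensity a i' j' ≤ udensity a i j)
    (hshort : ∀ i' j', 1 ≤ i' → i' ≤ j' → j' ≤ n → L ≤ j' - i' + 1 →
      udensity a i' j' = udensity a i j → j - i ≤ j' - i') :
    j - i + 1 ≤ 2 * L - 1 := by
  by_contra hcon
  push_neg at hcon
  have hbig : i + 2 * L ≤ j + 1 := by omega
  set m := i + L - 1 with hm
  have hm1 : m + 1 = i + L := by omega
  have him : i ≤ m := by omega
  have hmj : i + L ≤ j := by omega
  have hmcast : (m : ℝ) = (i : ℝ) + L - 1 := by
    have := congrArg (Nat.cast (R := ℝ)) hm1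
    push_cast at this
    linarith
  -- sum split
  have hsplit : ∑ t ∈ Finset.Icc i j, a t
      = (∑ t ∈ Finset.Icc i m, a t) + ∑ t ∈ Finset.Icc (i + L) j, a t := by
    rw [← Finset.Ico_add_one_right_eq_Icc i j, ← Finset.Ico_add_one_right_eq_Icc i m, ← Finset.Ico_add_one_right_eq_Icc (i + L) j]
    have hms : m.succ = i + L := hm1
    rw [hm1]
    exact (Finset.sum_Ico_consecutive _ (by omega) (by omega)).symm
  set S1 := ∑ t ∈ Finset.Icc i m, a t with hS1
  set S2 := ∑ t ∈ Finset.Icc (i + L) j, a t with hS2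
  set D : ℝ := (j : ℝ) - i + 1 with hD
  have hDpos : 0 < D := by
    have : (i : ℝ) ≤ j := by exact_mod_cast hij
    simp only [hD]; linarith
  have hLpos : (0 : ℝ) < L := by exact_mod_cast hL
  have hDL : (0 : ℝ) < D - L := by
    have : (i : ℝ) + 2 * L ≤ (j : ℝ) + 1 := by exact_mod_cast hbig
    simp only [hD]; linarith
  have hd1 : udensity a i m = S1 / L := by
    unfold udensity
    rw [hmcast]; ring_nf
    rw [hS1]; ring
  have hd2 : udensity a (i + L) j = S2 / (D - L) := by
    unfold udensity
    push_cast
    simp only [hD]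
    ring_nf
    rw [hS2]; ring
  have hdij : udensity a i j = (S1 + S2) / D := by
    unfold udensity
    rw [hsplit]
  have hkey : udensity a i j ≤ udensity a i m ∨ udensity a i j ≤ udensity a (i + L) j := by
    by_contra h
    push_neg at h
    obtain ⟨h1, h2⟩ := h
    rw [hd1, hdij] at h1
    rw [hd2, hdij] at h2
    have e1 : S1 < L * ((S1 + S2) / D) := by
      have := (div_lt_iff₀ hLpos).mp h1
      linarith
    have e2 : S2 < (D - L) * ((S1 + S2) / D) := by
      have := (div_lt_iff₀ hDL).mp h2
      linarith
    have : S1 + S2 < D * ((S1 + S2) / D) := by linarith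
    rw [mul_div_cancel₀ _ (ne_of_gt hDpos)] at this
    linarith
  rcases hkey with hk | hk
  · have hle := hopt i m hi him (by omega) (by omega)
    have heq : udensity a i m = udensity a i j := le_antisymm hle hk
    have := hshort i m hi him (by omega) (by omega) heq
    omega
  · have hle := hopt (i + L) j (by omega) hmj hjn (by omega)
    have heq : udensity a (i + L) j = udensity a i j := le_antisymm hle hk
    have := hshort (i + L) j (by omega) hmj hjn (by omega) heq
    omega
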